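/- Let (X_i)_{i≥0} be a stationary ℝ^d-valued process that is (Θ,r)-multiple mixing with respect to a class G of measurable functions ℝ^d→ℝ with seminorm ‖·‖_G, and let p be a positive integer such that Σ_{i=0}^∞ i^{p−1} Θ(i) < ∞. Then for every q ∈ {1,…,p} there is a constant K' < ∞ such that for all n ≥ 1 and all f ∈ G with ‖f‖_∞ ≤ 1 and E f(X_0) = 0: J_n(p,q) ≤ K' ‖f(X_0)‖_r ‖f‖_G + n · I_n(q−1) · I_n(p−q). -/

import Mathlib

open MeasureTheory Filter Set

noncomputable section

/-- A process `X` is stationary if all shifted processes have the same law. -/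
def Stationary {Ω E : Type*} [MeasurableSpace Ω] [MeasurableSpace E]
    (P : Measure Ω) (X : ℕ → Ω → E) : Prop :=
  ∀ k : ℕ, Measure.map (fun ω (i : ℕ) => X (i + k) ω) P =
    Measure.map (fun ω (i : ℕ) => X i ω) P

/-- The `L^r`-norm `(E |f(X₀)|^r)^(1/r)` of `f(X₀)`. -/
def rNorm {Ω : Type*} [MeasurableSpace Ω] {d : ℕ} (P : Measure Ω)
    (X : ℕ → Ω → (Fin d → ℝ)) (f : (Fin d → ℝ) → ℝ) (r : ℝ) : ℝ :=
  (∫ ω, |f (X 0 ω)| ^ r ∂P) ^ (1 / r)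

/-- The process `(X_i)` is `(Θ,r)`-multiple mixing with respect to the class `G`
equipped with the seminorm `nG`.  Here, for `i : Fin p → ℕ` encoding `i_1, …, i_p`,
the partial sum `i_j* = i_1 + ⋯ + i_j` appears as `∑ t ∈ Finset.Iic j, i t`, and
`q : Fin p` encodes the paper's `q ∈ {1, …, p}` (as `q + 1`). -/
def MultipleMixing {Ω : Type*} [MeasurableSpace Ω] {d : ℕ} (P : Measure Ω)
    (X : ℕ → Ω → (Fin d → ℝ)) (G : Set ((Fin d → ℝ) → ℝ))
    (nG : ((Fin d → ℝ) → ℝ) → ℝ) (Θ : ℕ → ℝ) (r : ℝ) : Prop :=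
  1 ≤ r ∧ (∀ i, 0 ≤ Θ i) ∧ (∀ i j : ℕ, i ≤ j → Θ j ≤ Θ i) ∧
  ∀ p : ℕ, 1 ≤ p → ∃ K : ℝ,
    ∀ f ∈ G, (∀ x, |f x| ≤ 1) → (∫ ω, f (X 0 ω) ∂P) = 0 →
      ∀ (i : Fin p → ℕ) (q : Fin p),
        |(∫ ω, (f (X 0 ω) * ∏ j ∈ Finset.Iio q, f (X (∑ t ∈ Finset.Iic j, i t) ω)) *
              (∏ j ∈ Finset.Ici q, f (X (∑ t ∈ Finset.Iic j, i t) ω)) ∂P) -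
          (∫ ω, f (X 0 ω) * ∏ j ∈ Finset.Iio q, f (X (∑ t ∈ Finset.Iic j, i t) ω) ∂P) *
          (∫ ω, ∏ j ∈ Finset.Ici q, f (X (∑ t ∈ Finset.Iic j, i t) ω) ∂P)|
        ≤ K * rNorm P X f r * nG f * Θ (i q)

/-- `I_n(p) = ∑_{0 ≤ i_1,…,i_p ≤ n-1, i_p* ≤ n-1} |E(f(X_0) f(X_{i_1*}) ⋯ f(X_{i_p*}))|`
(for `p = 0` this is `|E f(X_0)|`, which is `0` for centered `f`). -/
def In {Ω : Type*} [MeasurableSpace Ω] {d : ℕ} (P : Measure Ω)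
    (X : ℕ → Ω → (Fin d → ℝ)) (f : (Fin d → ℝ) → ℝ) (n p : ℕ) : ℝ :=
  ∑ i ∈ (Fintype.piFinset (fun _ : Fin p => Finset.range n)).filter
      (fun i => ∑ t, i t ≤ n - 1),
    |∫ ω, f (X 0 ω) * ∏ j : Fin p, f (X (∑ t ∈ Finset.Iic j, i t) ω) ∂P|

/-- `J_n(p,q)`: the part of `I_n(p)` where `i_q` is the largest increment; here `q : Fin p`
encodes the paper's `q ∈ {1,…,p}` (as `q + 1`). -/
def Jn {Ω : Type*} [MeasurableSpace Ω] {d : ℕ} (P : Measure Ω)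
    (X : ℕ → Ω → (Fin d → ℝ)) (f : (Fin d → ℝ) → ℝ) (n p : ℕ) (q : Fin p) : ℝ :=
  ∑ i ∈ (Fintype.piFinset (fun _ : Fin p => Finset.range n)).filter
      (fun i => (∀ t, i t ≤ i q) ∧ ∑ t, i t ≤ n - 1),
    |∫ ω, f (X 0 ω) * ∏ j : Fin p, f (X (∑ t ∈ Finset.Iic j, i t) ω) ∂P|


/-! ### Auxiliary lemmas -/

/-- Extend `i : Fin p → ℕ` to `ℕ` by zero. -/
def extN {p : ℕ} (i : Fin p → ℕ) : ℕ → ℕ := fun m => if h : m < p then i ⟨m, h⟩ else 0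

lemma extN_lt {p : ℕ} (i : Fin p → ℕ) {m : ℕ} (h : m < p) : extN i m = i ⟨m, h⟩ := dif_pos h

lemma sum_Iic_eq {p : ℕ} (i : Fin p → ℕ) (j : Fin p) :
    ∑ t ∈ Finset.Iic j, i t = ∑ m ∈ Finset.range (j.1 + 1), extN i m := by
  refine Finset.sum_bij' (fun t _ => (t : ℕ))
    (fun m hm => ⟨m, lt_of_lt_of_le (Finset.mem_range.mp hm) j.2⟩) ?_ ?_ ?_ ?_ ?_
  · intro t ht
    have : t ≤ j := Finset.mem_Iic.mp ht
    simp only [Finset.mem_range]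
    omega
  · intro m hm
    have : m < j.1 + 1 := Finset.mem_range.mp hm
    simp only [Finset.mem_Iic, Fin.le_def]
    omega
  · intro t ht; rfl
  · intro m hm; rfl
  · intro t ht; rw [extN_lt]

lemma prod_Iio_eq {M : Type*} [CommMonoid M] {p : ℕ} (F : ℕ → M) (i : Fin p → ℕ) (q : Fin p) :
    ∏ j ∈ Finset.Iio q, F (∑ t ∈ Finset.Iic j, i t)
      = ∏ m ∈ Finset.range q.1, F (∑ t ∈ Finset.range (m + 1), extN i t) := by
  refine Finset.prod_bij' (fun t _ => (t : ℕ))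
    (fun m hm => ⟨m, lt_trans (Finset.mem_range.mp hm) q.2⟩) ?_ ?_ ?_ ?_ ?_
  · intro t ht
    have : t < q := Finset.mem_Iio.mp ht
    simp only [Finset.mem_range]
    omega
  · intro m hm
    have : m < q.1 := Finset.mem_range.mp hm
    simp only [Finset.mem_Iio, Fin.lt_def]
    omega
  · intro t ht; rfl
  · intro m hm; rfl
  · intro t ht; rw [sum_Iic_eq]

lemma prod_Ici_eq {M : Type*} [CommMonoid M] {p : ℕ} (F : ℕ → M) (i : Fin p → ℕ) (q : Fin p) :
    ∏ j ∈ Finset.Ici q, F (∑ t ∈ Finset.Iic j, i t)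
      = ∏ m ∈ Finset.Ico q.1 p, F (∑ t ∈ Finset.range (m + 1), extN i t) := by
  refine Finset.prod_bij' (fun t _ => (t : ℕ))
    (fun m hm => ⟨m, (Finset.mem_Ico.mp hm).2⟩) ?_ ?_ ?_ ?_ ?_
  · intro t ht
    have : q ≤ t := Finset.mem_Ici.mp ht
    simp only [Finset.mem_Ico, Fin.le_def] at *
    omega
  · intro m hm
    have := Finset.mem_Ico.mp hm
    simp only [Finset.mem_Ici, Fin.le_def]
    omega
  · intro t ht; rfl
  · intro m hm; rfl
  · intro t ht; rw [sum_Iic_eq]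

lemma prod_univ_eq {M : Type*} [CommMonoid M] {p : ℕ} (F : ℕ → M) (i : Fin p → ℕ) :
    ∏ j : Fin p, F (∑ t ∈ Finset.Iic j, i t)
      = ∏ m ∈ Finset.range p, F (∑ t ∈ Finset.range (m + 1), extN i t) := by
  rw [← Fin.prod_univ_eq_prod_range (fun m => F (∑ t ∈ Finset.range (m + 1), extN i t)) p]
  exact Finset.prod_congr rfl fun j _ => by rw [sum_Iic_eq]

lemma sum_univ_eq {p : ℕ} (i : Fin p → ℕ) :
    ∑ t, i t = ∑ m ∈ Finset.range p, extN i m := by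
  rw [← Fin.sum_univ_eq_sum_range (extN i) p]
  exact Finset.sum_congr rfl fun t _ => by rw [extN_lt i t.2]

lemma prod_split {M : Type*} [CommMonoid M] (F : ℕ → M) {a p : ℕ} (hap : a ≤ p) :
    ∏ m ∈ Finset.range p, F m = (∏ m ∈ Finset.range a, F m) * ∏ m ∈ Finset.Ico a p, F m := by
  rw [Finset.range_eq_Ico, ← Finset.prod_Ico_consecutive F (Nat.zero_le a) hap, Finset.range_eq_Ico]

lemma prod_Ico_shift {M : Type*} [CommMonoid M] (F : ℕ → M) (g : ℕ → ℕ) {a p : ℕ} (hap : a < p) :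
    ∏ m ∈ Finset.Ico a p, F ((∑ t ∈ Finset.range (m + 1), g t) - ∑ t ∈ Finset.range (a + 1), g t)
      = F 0 * ∏ u ∈ Finset.range (p - a - 1), F (∑ t ∈ Finset.range (u + 1), g (a + 1 + t)) := by
  rw [Finset.prod_eq_prod_Ico_succ_bot hap]
  congr 1
  · congr 1; exact Nat.sub_self _
  · rw [Finset.prod_Ico_eq_prod_range]
    have hpa : p - (a + 1) = p - a - 1 := by omega
    rw [hpa]
    refine Finset.prod_congr rfl fun u hu => ?_
    congr 1
    have h1 : ∑ t ∈ Finset.range (a + 1), g t + ∑ t ∈ Finset.Ico (a + 1) (a + 1 + u + 1), g t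
        = ∑ t ∈ Finset.range (a + 1 + u + 1), g t := by
      rw [Finset.range_eq_Ico, Finset.range_eq_Ico]
      exact Finset.sum_Ico_consecutive g (Nat.zero_le _) (by omega : a + 1 ≤ a + 1 + u + 1)
    have h2 : ∑ t ∈ Finset.Ico (a + 1) (a + 1 + u + 1), g t
        = ∑ t ∈ Finset.range (u + 1), g (a + 1 + t) := by
      rw [Finset.sum_Ico_eq_sum_range g (a + 1) (a + 1 + u + 1),
        show a + 1 + u + 1 - (a + 1) = u + 1 by omega]
    rw [← h1, h2, Nat.add_sub_cancel_left]

lemma le_sum_range {g : ℕ → ℕ} {a m : ℕ} (h : a ≤ m) :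
    ∑ t ∈ Finset.range (a + 1), g t ≤ ∑ t ∈ Finset.range (m + 1), g t :=
  Finset.sum_le_sum_of_subset (Finset.range_subset_range.mpr (by omega))

/-- The first `q` increments. -/
def aF {p : ℕ} (q : Fin p) (i : Fin p → ℕ) : Fin (q : ℕ) → ℕ :=
  fun u => i (Fin.castLE q.2.le u)

/-- The increments after `q`. -/
def bF {p : ℕ} (q : Fin p) (i : Fin p → ℕ) : Fin (p - (q : ℕ) - 1) → ℕ :=
  fun u => i ⟨(q : ℕ) + 1 + u.1, by have h1 := u.2; have h2 := q.2; omega⟩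

lemma integral_shift {Ω : Type*} [MeasurableSpace Ω] {d : ℕ} (P : Measure Ω)
    (X : ℕ → Ω → (Fin d → ℝ)) (hX : ∀ i, Measurable (X i)) (hstat : Stationary P X)
    (g : (ℕ → (Fin d → ℝ)) → ℝ) (hg : Measurable g) (k : ℕ) :
    ∫ ω, g (fun m => X (m + k) ω) ∂P = ∫ ω, g (fun m => X m ω) ∂P := by
  have h1 : Measurable (fun ω (m : ℕ) => X (m + k) ω) :=
    measurable_pi_lambda _ fun m => hX (m + k)
  have h2 : Measurable (fun ω (m : ℕ) => X m ω) := measurable_pi_lambda _ fun m => hX m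
  rw [← MeasureTheory.integral_map h1.aemeasurable hg.aestronglyMeasurable,
    ← MeasureTheory.integral_map h2.aemeasurable hg.aestronglyMeasurable, hstat k]

/-- Lemma 5 of the paper: under `(Θ,r)`-multiple mixing and
`∑ i^(p-1) Θ(i) < ∞`, one has `J_n(p,q) ≤ K' ‖f(X₀)‖_r ‖f‖_G + n I_n(q-1) I_n(p-q)`. -/
theorem stmt9 {Ω : Type*} [MeasurableSpace Ω] {d : ℕ}
    (P : Measure Ω) [IsProbabilityMeasure P]
    (X : ℕ → Ω → (Fin d → ℝ)) (hXmeas : ∀ i, Measurable (X i))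
    (hstat : Stationary P X)
    (G : Set ((Fin d → ℝ) → ℝ)) (hGmeas : ∀ f ∈ G, Measurable f)
    (nG : ((Fin d → ℝ) → ℝ) → ℝ)
    (Θ : ℕ → ℝ) (r : ℝ)
    (hmix : MultipleMixing P X G nG Θ r)
    (p : ℕ) (hp : 1 ≤ p)
    (hΘ : Summable (fun i : ℕ => (i : ℝ) ^ (p - 1) * Θ i)) :
    ∀ q : Fin p, ∃ K' : ℝ,
      ∀ n : ℕ, 1 ≤ n → ∀ f ∈ G, (∀ x, |f x| ≤ 1) → (∫ ω, f (X 0 ω) ∂P) = 0 →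
        Jn P X f n p q ≤ K' * rNorm P X f r * nG f +
          (n : ℝ) * In P X f n (q : ℕ) * In P X f n (p - (q : ℕ) - 1) := by
  intro q
  obtain ⟨hr, hΘ0, hΘmono, hmixp⟩ := hmix
  obtain ⟨K, hK⟩ := hmixp p hp
  refine ⟨K * (Θ 0 + 2 ^ (p - 1) * ∑' j : ℕ, (j : ℝ) ^ (p - 1) * Θ j), ?_⟩
  set C : ℝ := Θ 0 + 2 ^ (p - 1) * ∑' j : ℕ, (j : ℝ) ^ (p - 1) * Θ j with hCdef
  intro n hn f hf hf1 hf0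
  have haplt : (q : ℕ) < p := q.2
  set T := (Fintype.piFinset (fun _ : Fin p => Finset.range n)).filter
      (fun i => (∀ t, i t ≤ i q) ∧ ∑ t, i t ≤ n - 1) with hT
  have hJn : Jn P X f n p q
      = ∑ i ∈ T, |∫ ω, f (X 0 ω) * ∏ j : Fin p, f (X (∑ t ∈ Finset.Iic j, i t) ω) ∂P| := rfl
  -- Step 1 : pointwise bound from the mixing property
  have step1 : ∀ i ∈ T,
      |∫ ω, f (X 0 ω) * ∏ j : Fin p, f (X (∑ t ∈ Finset.Iic j, i t) ω) ∂P|
        ≤ K * rNorm P X f r * nG f * Θ (i q) +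
          |∫ ω, f (X 0 ω) * ∏ j ∈ Finset.Iio q, f (X (∑ t ∈ Finset.Iic j, i t) ω) ∂P| *
          |∫ ω, ∏ j ∈ Finset.Ici q, f (X (∑ t ∈ Finset.Iic j, i t) ω) ∂P| := by
    intro i _
    have hsplit : (∫ ω, f (X 0 ω) * ∏ j : Fin p, f (X (∑ t ∈ Finset.Iic j, i t) ω) ∂P)
        = ∫ ω, (f (X 0 ω) * ∏ j ∈ Finset.Iio q, f (X (∑ t ∈ Finset.Iic j, i t) ω)) *
            ∏ j ∈ Finset.Ici q, f (X (∑ t ∈ Finset.Iic j, i t) ω) ∂P := by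
      congr 1
      funext ω
      rw [prod_univ_eq (fun m => f (X m ω)) i,
        prod_split (fun m => f (X (∑ t ∈ Finset.range (m + 1), extN i t) ω)) haplt.le,
        prod_Iio_eq (fun m => f (X m ω)) i q, prod_Ici_eq (fun m => f (X m ω)) i q, mul_assoc]
    have hmixi := hK f hf hf1 hf0 i q
    rw [hsplit]
    set I := ∫ ω, (f (X 0 ω) * ∏ j ∈ Finset.Iio q, f (X (∑ t ∈ Finset.Iic j, i t) ω)) *
        ∏ j ∈ Finset.Ici q, f (X (∑ t ∈ Finset.Iic j, i t) ω) ∂P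
    set I1 := ∫ ω, f (X 0 ω) * ∏ j ∈ Finset.Iio q, f (X (∑ t ∈ Finset.Iic j, i t) ω) ∂P
    set I2 := ∫ ω, ∏ j ∈ Finset.Ici q, f (X (∑ t ∈ Finset.Iic j, i t) ω) ∂P
    calc |I| = |(I - I1 * I2) + I1 * I2| := by ring_nf
      _ ≤ |I - I1 * I2| + |I1 * I2| := abs_add_le _ _
      _ ≤ K * rNorm P X f r * nG f * Θ (i q) + |I1| * |I2| :=
          add_le_add hmixi (le_of_eq (abs_mul _ _))
  -- Step 3 : sum of the mixing error terms
  have hcard : ∀ m, (T.filter (fun i => i q = m)).card ≤ (m + 1) ^ (p - 1) := by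
    intro m
    have hinj : Set.InjOn (fun (i : Fin p → ℕ) (t : {t : Fin p // t ≠ q}) => i t.1)
        (T.filter (fun i => i q = m)) := by
      intro i hi i' hi' he
      have hiq : i q = m := (Finset.mem_filter.mp hi).2
      have hiq' : i' q = m := (Finset.mem_filter.mp hi').2
      funext t
      by_cases ht : t = q
      · rw [ht, hiq, hiq']
      · exact congrFun he ⟨t, ht⟩
    have hmaps : ∀ i ∈ T.filter (fun i => i q = m),
        (fun (t : {t : Fin p // t ≠ q}) => i t.1)
          ∈ Fintype.piFinset (fun _ : {t : Fin p // t ≠ q} => Finset.range (m + 1)) := by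
      intro i hi
      rw [Fintype.mem_piFinset]
      intro t
      have h1 := (Finset.mem_filter.mp (Finset.mem_filter.mp hi).1).2.1 t.1
      have h2 : i q = m := (Finset.mem_filter.mp hi).2
      rw [Finset.mem_range]
      omega
    calc (T.filter (fun i => i q = m)).card
        ≤ (Fintype.piFinset (fun _ : {t : Fin p // t ≠ q} => Finset.range (m + 1))).card :=
          Finset.card_le_card_of_injOn _ hmaps hinj
      _ = (m + 1) ^ (p - 1) := by
          rw [Fintype.card_piFinset]
          simp only [Finset.card_range, Finset.prod_const, Finset.card_univ]
          rw [Fintype.card_subtype_compl, Fintype.card_subtype_eq, Fintype.card_fin]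
  have hΘsum : ∑ i ∈ T, Θ (i q) ≤ ∑ m ∈ Finset.range n, ((m : ℝ) + 1) ^ (p - 1) * Θ m := by
    have hmap : ∀ i ∈ T, i q ∈ Finset.range n := fun i hi =>
      (Fintype.mem_piFinset.mp (Finset.mem_filter.mp hi).1) q
    rw [← Finset.sum_fiberwise_of_maps_to hmap (fun i => Θ (i q))]
    refine Finset.sum_le_sum fun m hm => ?_
    have h1 : ∑ i ∈ T.filter (fun i => i q = m), Θ (i q)
        = ∑ _i ∈ T.filter (fun i => i q = m), Θ m :=
      Finset.sum_congr rfl fun i hi => by rw [(Finset.mem_filter.mp hi).2]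
    rw [h1, Finset.sum_const, nsmul_eq_mul]
    refine mul_le_mul_of_nonneg_right ?_ (hΘ0 m)
    calc ((T.filter (fun i => i q = m)).card : ℝ)
        ≤ (((m + 1) ^ (p - 1) : ℕ) : ℝ) := Nat.cast_le.mpr (hcard m)
      _ = ((m : ℝ) + 1) ^ (p - 1) := by push_cast; ring
  have htsum_le : ∑ m ∈ Finset.range n, ((m : ℝ) + 1) ^ (p - 1) * Θ m ≤ C := by
    rw [Finset.range_eq_Ico, Finset.sum_eq_sum_Ico_succ_bot (show 0 < n by omega), hCdef]
    refine add_le_add (le_of_eq (by norm_num)) ?_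
    calc ∑ m ∈ Finset.Ico 1 n, ((m : ℝ) + 1) ^ (p - 1) * Θ m
        ≤ ∑ m ∈ Finset.Ico 1 n, 2 ^ (p - 1) * ((m : ℝ) ^ (p - 1) * Θ m) := by
          refine Finset.sum_le_sum fun m hm => ?_
          have hm1 : 1 ≤ m := (Finset.mem_Ico.mp hm).1
          have hb : ((m : ℝ) + 1) ^ (p - 1) ≤ (2 * (m : ℝ)) ^ (p - 1) := by
            refine pow_le_pow_left₀ (by positivity) ?_ _
            have : (1 : ℝ) ≤ (m : ℝ) := by exact_mod_cast hm1
            linarith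
          rw [mul_pow] at hb
          calc ((m : ℝ) + 1) ^ (p - 1) * Θ m ≤ 2 ^ (p - 1) * (m : ℝ) ^ (p - 1) * Θ m :=
                mul_le_mul_of_nonneg_right hb (hΘ0 m)
            _ = 2 ^ (p - 1) * ((m : ℝ) ^ (p - 1) * Θ m) := by ring
      _ = 2 ^ (p - 1) * ∑ m ∈ Finset.Ico 1 n, (m : ℝ) ^ (p - 1) * Θ m :=
          (Finset.mul_sum _ _ _).symm
      _ ≤ 2 ^ (p - 1) * ∑' j : ℕ, (j : ℝ) ^ (p - 1) * Θ j := by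
          refine mul_le_mul_of_nonneg_left ?_ (by positivity)
          exact Summable.sum_le_tsum _ (fun j _ => mul_nonneg (by positivity) (hΘ0 j)) hΘ
  have step3 : ∑ i ∈ T, K * rNorm P X f r * nG f * Θ (i q)
      ≤ K * C * rNorm P X f r * nG f := by
    rcases le_or_gt 0 (K * rNorm P X f r * nG f) with hs0 | hs0
    · have h1 : ∑ i ∈ T, K * rNorm P X f r * nG f * Θ (i q)
          = K * rNorm P X f r * nG f * ∑ i ∈ T, Θ (i q) := (Finset.mul_sum _ _ _).symm
      rw [h1]
      calc K * rNorm P X f r * nG f * ∑ i ∈ T, Θ (i q)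
          ≤ K * rNorm P X f r * nG f * C :=
            mul_le_mul_of_nonneg_left (hΘsum.trans htsum_le) hs0
        _ = K * C * rNorm P X f r * nG f := by ring
    · have h00 := hK f hf hf1 hf0 (fun _ => 0) q
      have h1 : 0 ≤ K * rNorm P X f r * nG f * Θ 0 := le_trans (abs_nonneg _) h00
      have hΘzero : Θ 0 = 0 := by
        have h2 : Θ 0 ≤ 0 := by nlinarith [hΘ0 0]
        exact le_antisymm h2 (hΘ0 0)
      have hΘall : ∀ j, Θ j = 0 := fun j =>
        le_antisymm (hΘzero ▸ hΘmono 0 j (Nat.zero_le _)) (hΘ0 j)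
      have hCzero : C = 0 := by
        rw [hCdef]
        have h3 : (fun j : ℕ => (j : ℝ) ^ (p - 1) * Θ j) = fun _ => (0 : ℝ) :=
          funext fun j => by rw [hΘall j]; ring
        rw [h3, tsum_zero, hΘall 0]
        ring
      have h4 : ∑ i ∈ T, K * rNorm P X f r * nG f * Θ (i q) = 0 :=
        Finset.sum_eq_zero fun i _ => by rw [hΘall (i q)]; ring
      rw [h4, hCzero]
      ring_nf
      exact le_refl 0
  -- Step 4 : the product terms
  have hTmem : ∀ i ∈ T, (∀ t, i t < n) ∧ (∀ t, i t ≤ i q) ∧ ∑ t, i t ≤ n - 1 := by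
    intro i hi
    obtain ⟨h1, h2, h3⟩ := Finset.mem_filter.mp hi
    exact ⟨fun t => Finset.mem_range.mp ((Fintype.mem_piFinset.mp h1) t), h2, h3⟩
  have haFmem : ∀ i ∈ T, aF q i ∈ (Fintype.piFinset (fun _ : Fin (q : ℕ) => Finset.range n)).filter
      (fun α => ∑ t, α t ≤ n - 1) := by
    intro i hi
    obtain ⟨h1, h2, h3⟩ := hTmem i hi
    rw [Finset.mem_filter, Fintype.mem_piFinset]
    refine ⟨fun u => Finset.mem_range.mpr (h1 _), ?_⟩
    have e1 : ∑ u, aF q i u = ∑ m ∈ Finset.range (q : ℕ), extN i m := by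
      rw [sum_univ_eq (aF q i)]
      refine Finset.sum_congr rfl fun m hm => ?_
      have hma : m < (q : ℕ) := Finset.mem_range.mp hm
      rw [extN_lt (aF q i) hma, extN_lt i (hma.trans haplt)]
      rfl
    have e2 : ∑ m ∈ Finset.range (q : ℕ), extN i m ≤ ∑ m ∈ Finset.range p, extN i m :=
      Finset.sum_le_sum_of_subset (Finset.range_subset_range.mpr haplt.le)
    rw [e1]
    exact le_trans e2 (le_trans (le_of_eq (sum_univ_eq i).symm) h3)
  have hbFmem : ∀ i ∈ T, bF q i ∈
      (Fintype.piFinset (fun _ : Fin (p - (q : ℕ) - 1) => Finset.range n)).filter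
      (fun β => ∑ t, β t ≤ n - 1) := by
    intro i hi
    obtain ⟨h1, h2, h3⟩ := hTmem i hi
    rw [Finset.mem_filter, Fintype.mem_piFinset]
    refine ⟨fun u => Finset.mem_range.mpr (h1 _), ?_⟩
    have e1 : ∑ u, bF q i u = ∑ m ∈ Finset.range (p - (q : ℕ) - 1), extN i ((q : ℕ) + 1 + m) := by
      rw [sum_univ_eq (bF q i)]
      refine Finset.sum_congr rfl fun m hm => ?_
      have hm' : m < p - (q : ℕ) - 1 := Finset.mem_range.mp hm
      rw [extN_lt (bF q i) hm', extN_lt i (show (q : ℕ) + 1 + m < p by omega)]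
      rfl
    have e2 : ∑ m ∈ Finset.range (p - (q : ℕ) - 1), extN i ((q : ℕ) + 1 + m)
        = ∑ t ∈ Finset.Ico ((q : ℕ) + 1) p, extN i t := by
      rw [Finset.sum_Ico_eq_sum_range (extN i) ((q : ℕ) + 1) p,
        show p - ((q : ℕ) + 1) = p - (q : ℕ) - 1 by omega]
    have e3 : ∑ t ∈ Finset.Ico ((q : ℕ) + 1) p, extN i t ≤ ∑ m ∈ Finset.range p, extN i m :=
      Finset.sum_le_sum_of_subset (fun x hx => Finset.mem_range.mpr (Finset.mem_Ico.mp hx).2)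
    rw [e1, e2]
    exact le_trans e3 (le_trans (le_of_eq (sum_univ_eq i).symm) h3)
  have hAeq : ∀ i ∈ T,
      (∫ ω, f (X 0 ω) * ∏ j ∈ Finset.Iio q, f (X (∑ t ∈ Finset.Iic j, i t) ω) ∂P)
        = ∫ ω, f (X 0 ω) * ∏ j : Fin (q : ℕ), f (X (∑ t ∈ Finset.Iic j, aF q i t) ω) ∂P := by
    intro i _
    congr 1
    funext ω
    congr 1
    rw [prod_Iio_eq (fun m => f (X m ω)) i q, prod_univ_eq (fun m => f (X m ω)) (aF q i)]
    refine Finset.prod_congr rfl fun m hm => ?_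
    have hma : m < (q : ℕ) := Finset.mem_range.mp hm
    have hss : ∑ t ∈ Finset.range (m + 1), extN i t
        = ∑ t ∈ Finset.range (m + 1), extN (aF q i) t := by
      refine Finset.sum_congr rfl fun t ht => ?_
      have htm : t < m + 1 := Finset.mem_range.mp ht
      rw [extN_lt i (show t < p by omega), extN_lt (aF q i) (show t < (q : ℕ) by omega)]
      rfl
    rw [hss]
  have hBeq : ∀ i ∈ T,
      (∫ ω, ∏ j ∈ Finset.Ici q, f (X (∑ t ∈ Finset.Iic j, i t) ω) ∂P)
        = ∫ ω, f (X 0 ω) *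
            ∏ j : Fin (p - (q : ℕ) - 1), f (X (∑ t ∈ Finset.Iic j, bF q i t) ω) ∂P := by
    intro i _
    have hgmeas : Measurable (fun y : ℕ → (Fin d → ℝ) =>
        ∏ m ∈ Finset.Ico (q : ℕ) p,
          f (y ((∑ t ∈ Finset.range (m + 1), extN i t)
            - ∑ t ∈ Finset.range ((q : ℕ) + 1), extN i t))) :=
      Finset.measurable_prod _ fun m _ => (hGmeas f hf).comp (measurable_pi_apply _)
    calc (∫ ω, ∏ j ∈ Finset.Ici q, f (X (∑ t ∈ Finset.Iic j, i t) ω) ∂P)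
        = ∫ ω, ∏ m ∈ Finset.Ico (q : ℕ) p,
            f (X ((∑ t ∈ Finset.range (m + 1), extN i t)
              - ∑ t ∈ Finset.range ((q : ℕ) + 1), extN i t
              + ∑ t ∈ Finset.range ((q : ℕ) + 1), extN i t) ω) ∂P := by
          congr 1
          funext ω
          rw [prod_Ici_eq (fun m => f (X m ω)) i q]
          refine Finset.prod_congr rfl fun m hm => ?_
          rw [Nat.sub_add_cancel (le_sum_range (Finset.mem_Ico.mp hm).1)]
      _ = ∫ ω, ∏ m ∈ Finset.Ico (q : ℕ) p,
            f (X ((∑ t ∈ Finset.range (m + 1), extN i t)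
              - ∑ t ∈ Finset.range ((q : ℕ) + 1), extN i t) ω) ∂P :=
          integral_shift P X hXmeas hstat _ hgmeas (∑ t ∈ Finset.range ((q : ℕ) + 1), extN i t)
      _ = ∫ ω, f (X 0 ω) * ∏ u ∈ Finset.range (p - (q : ℕ) - 1),
            f (X (∑ t ∈ Finset.range (u + 1), extN i ((q : ℕ) + 1 + t)) ω) ∂P := by
          congr 1
          funext ω
          exact prod_Ico_shift (fun m => f (X m ω)) (extN i) haplt
      _ = ∫ ω, f (X 0 ω) *
            ∏ j : Fin (p - (q : ℕ) - 1), f (X (∑ t ∈ Finset.Iic j, bF q i t) ω) ∂P := by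
          congr 1
          funext ω
          congr 1
          rw [prod_univ_eq (fun m => f (X m ω)) (bF q i)]
          refine Finset.prod_congr rfl fun u hu => ?_
          have hu' : u < p - (q : ℕ) - 1 := Finset.mem_range.mp hu
          have hss : ∑ t ∈ Finset.range (u + 1), extN i ((q : ℕ) + 1 + t)
              = ∑ t ∈ Finset.range (u + 1), extN (bF q i) t := by
            refine Finset.sum_congr rfl fun t ht => ?_
            have ht' : t < u + 1 := Finset.mem_range.mp ht
            rw [extN_lt i (show (q : ℕ) + 1 + t < p by omega),
              extN_lt (bF q i) (show t < p - (q : ℕ) - 1 by omega)]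
            rfl
          rw [hss]
  have step4 : ∑ i ∈ T,
      |∫ ω, f (X 0 ω) * ∏ j ∈ Finset.Iio q, f (X (∑ t ∈ Finset.Iic j, i t) ω) ∂P| *
      |∫ ω, ∏ j ∈ Finset.Ici q, f (X (∑ t ∈ Finset.Iic j, i t) ω) ∂P|
      ≤ (n : ℝ) * In P X f n (q : ℕ) * In P X f n (p - (q : ℕ) - 1) := by
    set TA := (Fintype.piFinset (fun _ : Fin (q : ℕ) => Finset.range n)).filter
        (fun α => ∑ t, α t ≤ n - 1) with hTA
    set TB := (Fintype.piFinset (fun _ : Fin (p - (q : ℕ) - 1) => Finset.range n)).filter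
        (fun β => ∑ t, β t ≤ n - 1) with hTB
    have hInA : In P X f n (q : ℕ) = ∑ α ∈ TA,
        |∫ ω, f (X 0 ω) * ∏ j : Fin (q : ℕ), f (X (∑ t ∈ Finset.Iic j, α t) ω) ∂P| := rfl
    have hInB : In P X f n (p - (q : ℕ) - 1) = ∑ β ∈ TB,
        |∫ ω, f (X 0 ω) *
          ∏ j : Fin (p - (q : ℕ) - 1), f (X (∑ t ∈ Finset.Iic j, β t) ω) ∂P| := rfl
    set W : ℕ × (Fin (q : ℕ) → ℕ) × (Fin (p - (q : ℕ) - 1) → ℕ) → ℝ := fun x =>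
      |∫ ω, f (X 0 ω) * ∏ j : Fin (q : ℕ), f (X (∑ t ∈ Finset.Iic j, x.2.1 t) ω) ∂P| *
      |∫ ω, f (X 0 ω) *
        ∏ j : Fin (p - (q : ℕ) - 1), f (X (∑ t ∈ Finset.Iic j, x.2.2 t) ω) ∂P| with hW
    have hinjψ : Set.InjOn (fun i : Fin p → ℕ =>
        ((i q, aF q i, bF q i) : ℕ × (Fin (q : ℕ) → ℕ) × (Fin (p - (q : ℕ) - 1) → ℕ))) ↑T := by
      intro i _ i' _ he
      simp only [Prod.mk.injEq] at he
      obtain ⟨h1, h2, h3⟩ := he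
      funext t
      rcases lt_trichotomy (t : ℕ) (q : ℕ) with htl | hte | htg
      · have h4 := congrFun h2 ⟨(t : ℕ), htl⟩
        have h5 : Fin.castLE q.2.le ⟨(t : ℕ), htl⟩ = t := Fin.ext rfl
        simpa [aF, h5] using h4
      · have h6 : t = q := Fin.ext hte
        rw [h6]; exact h1
      · have h7 : (t : ℕ) - (q : ℕ) - 1 < p - (q : ℕ) - 1 := by have := t.2; omega
        have h4 := congrFun h3 ⟨(t : ℕ) - (q : ℕ) - 1, h7⟩
        simp only [bF] at h4
        have h5 : (⟨(q : ℕ) + 1 + ((t : ℕ) - (q : ℕ) - 1), by have := t.2; omega⟩ : Fin p)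
            = t := by
          apply Fin.ext
          show (q : ℕ) + 1 + ((t : ℕ) - (q : ℕ) - 1) = (t : ℕ)
          omega
        rw [← h5]
        exact h4
    have hsub : T.image (fun i : Fin p → ℕ =>
        ((i q, aF q i, bF q i) : ℕ × (Fin (q : ℕ) → ℕ) × (Fin (p - (q : ℕ) - 1) → ℕ)))
        ⊆ Finset.range n ×ˢ (TA ×ˢ TB) := by
      intro x hx
      obtain ⟨i, hi, rfl⟩ := Finset.mem_image.mp hx
      refine Finset.mem_product.mpr ⟨?_, Finset.mem_product.mpr ⟨haFmem i hi, hbFmem i hi⟩⟩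
      exact (Fintype.mem_piFinset.mp (Finset.mem_filter.mp hi).1) q
    calc ∑ i ∈ T,
        |∫ ω, f (X 0 ω) * ∏ j ∈ Finset.Iio q, f (X (∑ t ∈ Finset.Iic j, i t) ω) ∂P| *
        |∫ ω, ∏ j ∈ Finset.Ici q, f (X (∑ t ∈ Finset.Iic j, i t) ω) ∂P|
        = ∑ i ∈ T, W (i q, aF q i, bF q i) := by
          refine Finset.sum_congr rfl fun i hi => ?_
          simp only [hW]
          rw [hAeq i hi, hBeq i hi]
      _ = ∑ x ∈ T.image (fun i : Fin p → ℕ =>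
            ((i q, aF q i, bF q i) : ℕ × (Fin (q : ℕ) → ℕ) × (Fin (p - (q : ℕ) - 1) → ℕ))), W x :=
          (Finset.sum_image (fun i hi i' hi' h =>
            hinjψ (Finset.mem_coe.mpr hi) (Finset.mem_coe.mpr hi') h)).symm
      _ ≤ ∑ x ∈ Finset.range n ×ˢ (TA ×ˢ TB), W x := by
          refine Finset.sum_le_sum_of_subset_of_nonneg hsub fun x _ _ => ?_
          simp only [hW]
          positivity
      _ = ∑ m ∈ Finset.range n, ∑ y ∈ TA ×ˢ TB, W (m, y) := Finset.sum_product _ _ _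
      _ = ∑ _m ∈ Finset.range n, In P X f n (q : ℕ) * In P X f n (p - (q : ℕ) - 1) := by
          refine Finset.sum_congr rfl fun m _ => ?_
          rw [Finset.sum_product, hInA, hInB, Finset.sum_mul_sum]
      _ = (n : ℝ) * In P X f n (q : ℕ) * In P X f n (p - (q : ℕ) - 1) := by
          rw [Finset.sum_const, Finset.card_range, nsmul_eq_mul, mul_assoc]
  calc Jn P X f n p q
      ≤ ∑ i ∈ T, (K * rNorm P X f r * nG f * Θ (i q) +
          |∫ ω, f (X 0 ω) * ∏ j ∈ Finset.Iio q, f (X (∑ t ∈ Finset.Iic j, i t) ω) ∂P| *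
          |∫ ω, ∏ j ∈ Finset.Ici q, f (X (∑ t ∈ Finset.Iic j, i t) ω) ∂P|) := by
        rw [hJn]
        exact Finset.sum_le_sum step1
    _ = (∑ i ∈ T, K * rNorm P X f r * nG f * Θ (i q)) +
        ∑ i ∈ T,
          |∫ ω, f (X 0 ω) * ∏ j ∈ Finset.Iio q, f (X (∑ t ∈ Finset.Iic j, i t) ω) ∂P| *
          |∫ ω, ∏ j ∈ Finset.Ici q, f (X (∑ t ∈ Finset.Iic j, i t) ω) ∂P| :=
        Finset.sum_add_distrib
    _ ≤ K * C * rNorm P X f r * nG f +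
        (n : ℝ) * In P X f n (q : ℕ) * In P X f n (p - (q : ℕ) - 1) :=
        add_le_add step3 step4



end
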